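/- Let d ≥ 1, λ > 0, z_1, ..., z_l ∈ ℝ^d, γ ∈ ℝ^d, ξ_1, ..., ξ_l ∈ ℝ, and x_j = ⟨γ, z_j⟩ + ξ_j. Let V = λ I_d + Σ_{j=1}^l z_j z_j^T, b = Σ_{j=1}^l z_j x_j, s = Σ_{j=1}^l z_j ξ_j, and γ̂ = V^{-1} b. Then ‖γ̂ − γ‖_V ≤ √λ ‖γ‖₂ + ‖s‖_{V^{-1}}, where for a positive definite matrix M, ‖v‖_M denotes √(v^T M v). -/

import Mathlib

open Matrix

/-- Weighted 2-norm `‖v‖_M = √(vᵀ M v)` for a matrix `M`. -/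
noncomputable def wnorm {d : ℕ} (M : Matrix (Fin d) (Fin d) ℝ) (v : Fin d → ℝ) : ℝ :=
  Real.sqrt (v ⬝ᵥ (M *ᵥ v))

lemma vecMulVec_mulVec' {d : ℕ} (w v x : Fin d → ℝ) :
    Matrix.vecMulVec w v *ᵥ x = (v ⬝ᵥ x) • w := by
  ext i
  simp only [Matrix.mulVec, Matrix.vecMulVec_apply, dotProduct, Pi.smul_apply,
    smul_eq_mul, Finset.sum_mul, Finset.mul_sum]
  exact Finset.sum_congr rfl fun k _ => by ring

lemma sum_mulVec' {d l : ℕ} (f : Fin l → Matrix (Fin d) (Fin d) ℝ) (y : Fin d → ℝ) :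
    (∑ j, f j) *ᵥ y = ∑ j, f j *ᵥ y := by
  ext i
  simp only [Matrix.mulVec, dotProduct, Finset.sum_apply, Matrix.sum_apply,
    Finset.sum_mul]
  exact Finset.sum_comm

lemma dotProduct_sum' {d l : ℕ} (y : Fin d → ℝ) (w : Fin l → Fin d → ℝ) :
    y ⬝ᵥ (∑ j, w j) = ∑ j, y ⬝ᵥ w j := by
  simp only [dotProduct, Finset.sum_apply, Finset.mul_sum]
  exact Finset.sum_comm

lemma wnorm_sub_le {d : ℕ} {M : Matrix (Fin d) (Fin d) ℝ} (hM : M.PosDef) (a b : Fin d → ℝ) :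
    wnorm M (a - b) ≤ wnorm M a + wnorm M b := by
  letI inst : NormedAddCommGroup (Fin d → ℝ) := Matrix.toNormedAddCommGroup M hM
  have h : ∀ v : Fin d → ℝ, wnorm M v = @norm _ inst.toNorm v := fun v => by
    unfold wnorm; rw [dotProduct_comm]; rfl
  rw [h, h, h]
  exact @norm_sub_le _ (@NormedAddGroup.toSeminormedAddGroup _
    (@NormedAddCommGroup.toNormedAddGroup _ inst)) a b


/-!
STATEMENT 3: With data `x_j = ⟨γ, z_j⟩ + ξ_j`, Gram matrix `V = λ I + ∑_j z_j z_jᵀ`,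
`b = ∑_j x_j z_j`, noise vector `s = ∑_j ξ_j z_j`, and Ridge estimate `γ̂ = V⁻¹ b`,
we have `‖γ̂ − γ‖_V ≤ √λ ‖γ‖₂ + ‖s‖_{V⁻¹}`.
-/
theorem ridge_regression_confidence
    (d l : ℕ) (hd : 1 ≤ d) (lam : ℝ) (hlam : 0 < lam)
    (z : Fin l → Fin d → ℝ) (γ : Fin d → ℝ) (ξ : Fin l → ℝ)
    (x : Fin l → ℝ) (hx : ∀ j, x j = (∑ i, γ i * z j i) + ξ j)
    (V : Matrix (Fin d) (Fin d) ℝ)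
    (hV : V = lam • (1 : Matrix (Fin d) (Fin d) ℝ) +
      ∑ j, Matrix.vecMulVec (z j) (z j))
    (b s γhat : Fin d → ℝ)
    (hb : b = ∑ j, x j • z j)
    (hs : s = ∑ j, ξ j • z j)
    (hγhat : γhat = V⁻¹ *ᵥ b) :
    wnorm V (γhat - γ) ≤
      Real.sqrt lam * Real.sqrt (∑ i, (γ i) ^ 2) + wnorm V⁻¹ s := by
  have hVmul : ∀ y : Fin d → ℝ, V *ᵥ y = lam • y + ∑ j, (z j ⬝ᵥ y) • z j := by
    intro y
    rw [hV, Matrix.add_mulVec, Matrix.smul_mulVec, Matrix.one_mulVec, sum_mulVec']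
    congr 1
    exact Finset.sum_congr rfl fun j _ => vecMulVec_mulVec' _ _ _
  have hquad : ∀ y : Fin d → ℝ, y ⬝ᵥ (V *ᵥ y) = lam * (y ⬝ᵥ y) + ∑ j, (z j ⬝ᵥ y) ^ 2 := by
    intro y
    rw [hVmul y, dotProduct_add, dotProduct_smul, dotProduct_sum', smul_eq_mul]
    congr 1
    exact Finset.sum_congr rfl fun j _ => by
      rw [dotProduct_smul, smul_eq_mul, dotProduct_comm, sq]
  have hquad_ge : ∀ y : Fin d → ℝ, lam * (y ⬝ᵥ y) ≤ y ⬝ᵥ (V *ᵥ y) := by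
    intro y
    rw [hquad y]
    have : (0:ℝ) ≤ ∑ j, (z j ⬝ᵥ y) ^ 2 := Finset.sum_nonneg fun j _ => sq_nonneg _
    linarith
  have hherm_each : ∀ j, (Matrix.vecMulVec (z j) (z j))ᵀ = Matrix.vecMulVec (z j) (z j) := by
    intro j
    ext i k
    simp [Matrix.transpose_apply, Matrix.vecMulVec_apply, mul_comm]
  have hVpd : V.PosDef := by
    rw [Matrix.posDef_iff_dotProduct_mulVec]
    constructor
    · rw [hV]
      show _ᴴ = _
      simp [Matrix.conjTranspose_add, Matrix.conjTranspose_smul, Matrix.conjTranspose_one,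
        Matrix.conjTranspose_sum, Matrix.transpose_sum, hherm_each]
    · intro y hy
      have h1 : (0:ℝ) < y ⬝ᵥ y :=
        lt_of_le_of_ne (Finset.sum_nonneg fun i _ => mul_self_nonneg _)
          (fun h => hy (dotProduct_self_eq_zero.mp h.symm))
      simp only [star_trivial, RCLike.re_to_real]
      calc (0:ℝ) < lam * (y ⬝ᵥ y) := by positivity
      _ ≤ y ⬝ᵥ (V *ᵥ y) := hquad_ge y
  have hUdet : IsUnit V.det := (Matrix.isUnit_iff_isUnit_det V).mp hVpd.isUnit
  have hVVinv : V * V⁻¹ = 1 := Matrix.mul_nonsing_inv V hUdet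
  have hVinvV : V⁻¹ * V = 1 := Matrix.nonsing_inv_mul V hUdet
  set u := V⁻¹ *ᵥ γ with hu
  have hVu : V *ᵥ u = γ := by rw [hu, Matrix.mulVec_mulVec, hVVinv, Matrix.one_mulVec]
  have hbeq : b = (V *ᵥ γ - lam • γ) + s := by
    rw [hb, hs, hVmul γ]
    have hxz : ∀ j, x j • z j = (z j ⬝ᵥ γ) • z j + ξ j • z j := by
      intro j
      rw [hx j, add_smul]
      congr 2
      simp [dotProduct, mul_comm]
    rw [Finset.sum_congr rfl fun j _ => hxz j, Finset.sum_add_distrib]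
    abel
  have hkey : γhat - γ = (V⁻¹ *ᵥ s) - lam • u := by
    rw [hγhat, hbeq, Matrix.mulVec_add, Matrix.mulVec_sub, Matrix.mulVec_mulVec, hVinvV,
      Matrix.one_mulVec, Matrix.mulVec_smul]
    abel
  rw [hkey]
  have htri := wnorm_sub_le hVpd (V⁻¹ *ᵥ s) (lam • u)
  have hterm1 : wnorm V (V⁻¹ *ᵥ s) = wnorm V⁻¹ s := by
    unfold wnorm
    congr 1
    rw [Matrix.mulVec_mulVec, hVVinv, Matrix.one_mulVec, dotProduct_comm]
  have hterm2 : wnorm V (lam • u) ≤ Real.sqrt lam * Real.sqrt (∑ i, (γ i) ^ 2) := by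
    set t := u ⬝ᵥ γ with htdef
    have hqu : u ⬝ᵥ (V *ᵥ u) = t := by rw [hVu]
    have huu : 0 ≤ u ⬝ᵥ u := Finset.sum_nonneg fun i _ => mul_self_nonneg _
    have hg0 : 0 ≤ γ ⬝ᵥ γ := Finset.sum_nonneg fun i _ => mul_self_nonneg _
    have ht0 : 0 ≤ t := by
      rw [← hqu]
      calc (0:ℝ) ≤ lam * (u ⬝ᵥ u) := by positivity
      _ ≤ u ⬝ᵥ (V *ᵥ u) := hquad_ge u
    have hu2 : lam * (u ⬝ᵥ u) ≤ t := hqu ▸ hquad_ge u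
    have hCS : t ^ 2 ≤ (u ⬝ᵥ u) * (γ ⬝ᵥ γ) := by
      have := Finset.sum_mul_sq_le_sq_mul_sq Finset.univ u γ
      simpa [dotProduct, sq, htdef] using this
    have hmain : lam ^ 2 * t ≤ lam * (γ ⬝ᵥ γ) := by
      rcases eq_or_lt_of_le ht0 with h | h
      · rw [← h]
        nlinarith
      · have hq1 : lam * t ^ 2 ≤ lam * ((u ⬝ᵥ u) * (γ ⬝ᵥ γ)) :=
          mul_le_mul_of_nonneg_left hCS hlam.le
        have hq2 : (lam * (u ⬝ᵥ u)) * (γ ⬝ᵥ γ) ≤ t * (γ ⬝ᵥ γ) :=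
          mul_le_mul_of_nonneg_right hu2 hg0
        have hq3 : lam * t * t ≤ (γ ⬝ᵥ γ) * t := by nlinarith
        have hq4 : lam * t ≤ γ ⬝ᵥ γ := le_of_mul_le_mul_right hq3 h
        nlinarith
    have hval : wnorm V (lam • u) = Real.sqrt (lam ^ 2 * t) := by
      unfold wnorm
      congr 1
      rw [Matrix.mulVec_smul, hVu, smul_dotProduct, dotProduct_smul]
      simp only [smul_eq_mul, htdef]
      ring
    rw [hval]
    have hgam : (∑ i, (γ i) ^ 2) = γ ⬝ᵥ γ := by simp [dotProduct, sq]
    rw [hgam]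
    have : lam ^ 2 * t ≤ lam * (γ ⬝ᵥ γ) := hmain
    calc Real.sqrt (lam ^ 2 * t) ≤ Real.sqrt (lam * (γ ⬝ᵥ γ)) := Real.sqrt_le_sqrt this
    _ = Real.sqrt lam * Real.sqrt (γ ⬝ᵥ γ) := Real.sqrt_mul hlam.le _
  calc wnorm V ((V⁻¹ *ᵥ s) - lam • u) ≤ wnorm V (V⁻¹ *ᵥ s) + wnorm V (lam • u) := htri
    _ ≤ Real.sqrt lam * Real.sqrt (∑ i, (γ i) ^ 2) + wnorm V⁻¹ s := by
        rw [hterm1]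
        linarith [hterm2]
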